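/- Let p ≥ 1 and let ψ₁,…,ψ_p be positive and pairwise distinct, with Vandermonde determinant V(Ψ) = ∏_{1≤i<j≤p}(ψⱼ − ψᵢ). Then for all s ≥ 0, 1 − (1/V(Ψ)) · det N(s) = (∏_{i=1}^p ψᵢ) s^p / ∏_{i=1}^p (1 + ψᵢ s), where N(s) is the p×p matrix whose first column has entries 1/(1+ψᵢ s) and whose j-th column (2 ≤ j ≤ p) has entries ψᵢ^{j-1}. -/

import Mathlib

open Finset Matrix

private lemma geo_aux (x : ℝ) (m : ℕ) :
    (∑ k ∈ Finset.range m, (-x)^k) * (1 + x) = 1 - (-x)^m := by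
  induction m with
  | zero => simp
  | succ m ih => rw [Finset.sum_range_succ, add_mul, ih, pow_succ]; ring

/-- The determinantal identity at the end of the proof of Lemma A.6. -/
theorem stmt_5 (p : ℕ) (hp : 1 ≤ p) (ψ : Fin p → ℝ)
    (hpos : ∀ i, 0 < ψ i) (hdist : ∀ i j, i ≠ j → ψ i ≠ ψ j)
    (V : ℝ) (hV : V = ∏ i, ∏ j ∈ Finset.Ioi i, (ψ j - ψ i))
    (s : ℝ) (hs : 0 ≤ s) :
    1 - (1 / V) *
      (Matrix.of fun i j : Fin p =>
        if (j : ℕ) = 0 then 1 / (1 + ψ i * s) else ψ i ^ (j : ℕ)).det =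
      (∏ i, ψ i) * s ^ p / ∏ i, (1 + ψ i * s) := by
  obtain ⟨n, rfl⟩ : ∃ n, p = n + 1 := ⟨p - 1, (Nat.succ_pred_eq_of_pos hp).symm⟩
  have h1 : ∀ i, 0 < 1 + ψ i * s := fun i =>
    add_pos_of_pos_of_nonneg one_pos (mul_nonneg (hpos i).le hs)
  have h1' : ∀ i, 1 + ψ i * s ≠ 0 := fun i => (h1 i).ne'
  set A := vandermonde ψ with hA
  have hVdet : A.det = V := by rw [hA, det_vandermonde, hV]
  have hVne : V ≠ 0 := by
    rw [← hVdet, det_vandermonde_ne_zero_iff]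
    intro i j hij
    by_contra hne
    exact hdist i j hne hij
  set u : Fin (n+1) → ℝ := fun i => 1 / (1 + ψ i * s) with hu_def
  set w : Fin (n+1) → ℝ := fun i => ψ i ^ (n+1) / (1 + ψ i * s) with hw_def
  -- Step A : the matrix is an update of the Vandermonde matrix
  have hN : (Matrix.of fun i j : Fin (n+1) =>
      if (j : ℕ) = 0 then 1 / (1 + ψ i * s) else ψ i ^ (j : ℕ)) = A.updateCol 0 u := by
    ext i j
    rw [Matrix.updateCol_apply]
    by_cases hj : j = 0
    · subst hj; simp [hu_def]
    · have hj' : (j : ℕ) ≠ 0 := fun h => hj (Fin.ext h)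
      simp [hj, hj', hA, vandermonde_apply]
  -- Step B : expand the first column geometrically
  have hu : u = (fun i => ∑ k : Fin (n+1), ((-s)^(k:ℕ)) • A i k) + ((-s)^(n+1)) • w := by
    funext i
    have hg := geo_aux (ψ i * s) (n + 1)
    rw [neg_pow] at hg
    have hsum : ∑ k : Fin (n+1), ((-s)^(k:ℕ)) * A i k
        = ∑ k ∈ Finset.range (n+1), (-(ψ i * s))^k := by
      rw [show (fun k : Fin (n+1) => ((-s)^(k:ℕ)) * A i k)
          = fun k : Fin (n+1) => ((-s)^(k:ℕ)) * (ψ i ^ (k:ℕ)) from rfl,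
        Fin.sum_univ_eq_sum_range (fun k => ((-s)^k) * (ψ i ^ k)) (n+1)]
      refine Finset.sum_congr rfl fun k _ => ?_
      rw [← mul_pow]; ring_nf
    simp only [Pi.add_apply, Pi.smul_apply, smul_eq_mul]
    rw [hsum]
    have hc := h1' i
    simp only [hu_def, hw_def]
    field_simp
    linear_combination -hg
  have hdet1 : (A.updateCol 0 (fun i => ∑ k : Fin (n+1), ((-s)^(k:ℕ)) • A i k)).det
      = A.det := by
    have h := det_updateCol_sum A 0 (fun k => (-s)^(k:ℕ))
    simpa using h
  -- Step C : pull out row factors from the w-column matrix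
  set E : Matrix (Fin (n+1)) (Fin (n+1)) ℝ := Matrix.of fun i j =>
    if (j:ℕ) = 0 then ψ i ^ n else ψ i ^ ((j:ℕ)-1) * (1 + ψ i * s) with hE_def
  have hupdw : A.updateCol 0 w
      = Matrix.of (fun i j => (ψ i / (1 + ψ i * s)) * E i j) := by
    ext i j
    rw [Matrix.updateCol_apply]
    by_cases hj : j = 0
    · subst hj
      simp only [if_pos rfl, hE_def, Matrix.of_apply, Fin.val_zero, if_true, hw_def]
      rw [pow_succ']
      ring
    · have hj' : (j : ℕ) ≠ 0 := fun h => hj (Fin.ext h)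
      have hj1 : (j:ℕ) - 1 + 1 = (j:ℕ) := Nat.succ_pred_eq_of_pos (Nat.pos_of_ne_zero hj')
      have key : ψ i * ψ i ^ ((j:ℕ)-1) = ψ i ^ (j:ℕ) := by rw [← pow_succ', hj1]
      simp only [if_neg hj, hE_def, Matrix.of_apply, if_neg hj', hA, vandermonde_apply]
      have hc := h1' i
      field_simp
      linear_combination -key
  have hdet2 : (A.updateCol 0 w).det = (∏ i, ψ i / (1 + ψ i * s)) * E.det := by
    rw [hupdw]
    exact det_mul_column (fun i => ψ i / (1 + ψ i * s)) E
  -- Step D : telescoping column operations on E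
  set F : ℕ → Matrix (Fin (n+1)) (Fin (n+1)) ℝ := fun t => Matrix.of fun i j =>
    if (j:ℕ) = 0 then ψ i ^ n
    else ψ i ^ ((j:ℕ)-1) + (if (j:ℕ) ≤ t then s * ψ i ^ (j:ℕ) else 0) with hF_def
  have hEF : E = F n := by
    ext i j
    by_cases hj : (j:ℕ) = 0
    · simp [hE_def, hF_def, hj, Fin.val_eq_zero_iff.mp hj]
    · have hjn : (j:ℕ) ≤ n := Nat.lt_succ_iff.mp j.isLt
      have hj1 : (j:ℕ) - 1 + 1 = (j:ℕ) := Nat.succ_pred_eq_of_pos (Nat.pos_of_ne_zero hj)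
      have key : ψ i * ψ i ^ ((j:ℕ)-1) = ψ i ^ (j:ℕ) := by rw [← pow_succ', hj1]
      simp only [hE_def, hF_def, Matrix.of_apply, if_neg hj, if_pos hjn]
      linear_combination s * key
  have hstep : ∀ t, (F (t+1)).det = (F t).det := by
    intro t
    by_cases ht : n ≤ t
    · congr 1
      ext i j
      by_cases hj : (j:ℕ) = 0
      · simp [hF_def, hj]
      · have hjn : (j:ℕ) ≤ t := le_trans (Nat.lt_succ_iff.mp j.isLt) ht
        simp [hF_def, hj, hjn, Nat.le_succ_of_le hjn]
    · push_neg at ht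
      set jt : Fin (n+1) := ⟨t+1, by omega⟩ with hjt_def
      have hjtval : (jt : ℕ) = t + 1 := rfl
      have hjt0 : jt ≠ (0 : Fin (n+1)) := by
        simp [Fin.ext_iff, hjt_def]
      have hF1 : F (t+1) = updateCol (F t) jt
          ((fun i => ψ i ^ t) + s • (fun i => ψ i ^ (t+1))) := by
        ext i j
        rw [Matrix.updateCol_apply]
        by_cases hj : j = jt
        · subst hj
          rw [if_pos rfl]
          simp only [hF_def, Matrix.of_apply, hjtval, Pi.add_apply, Pi.smul_apply, smul_eq_mul]
          norm_num
        · rw [if_neg hj]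
          have hjv : (j:ℕ) ≠ t + 1 := by
            intro h; exact hj (Fin.ext (h.trans hjtval.symm))
          simp only [hF_def, Matrix.of_apply]
          by_cases hj0 : (j:ℕ) = 0
          · simp [hj0]
          · have hiff : ((j:ℕ) ≤ t + 1) ↔ ((j:ℕ) ≤ t) := by omega
            simp only [if_neg hj0, hiff]
      have e1 : updateCol (F t) jt (fun i => ψ i ^ t) = F t := by
        ext i j
        rw [Matrix.updateCol_apply]
        by_cases hj : j = jt
        · subst hj
          rw [if_pos rfl]
          simp only [hF_def, Matrix.of_apply, hjtval]
          have h1 : ¬ (t + 1 = 0) := by omega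
          have h2 : ¬ (t + 1 ≤ t) := by omega
          rw [if_neg h1, if_neg h2]
          norm_num
        · rw [if_neg hj]
      have e2 : (updateCol (F t) jt (fun i => ψ i ^ (t+1))).det = 0 := by
        by_cases hn : t + 1 = n
        · refine det_zero_of_column_eq (show (0 : Fin (n+1)) ≠ jt from (Ne.symm hjt0)) ?_
          intro k
          rw [Matrix.updateCol_apply, Matrix.updateCol_apply,
            if_neg (Ne.symm hjt0), if_pos rfl]
          simp [hF_def, hn]
        · set jt' : Fin (n+1) := ⟨t+2, by omega⟩ with hjt'_def
          have hne : jt ≠ jt' := by simp [Fin.ext_iff, hjt_def, hjt'_def]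
          refine det_zero_of_column_eq hne ?_
          intro k
          rw [Matrix.updateCol_apply, Matrix.updateCol_apply,
            if_pos rfl, if_neg (Ne.symm hne)]
          have h1 : ¬ ((jt' : ℕ) = 0) := by simp [hjt'_def]
          have h2 : ¬ ((jt' : ℕ) ≤ t) := by simp [hjt'_def]
          simp only [hF_def, Matrix.of_apply, if_neg h1, if_neg h2, hjt'_def]
          norm_num
      rw [hF1, det_updateCol_add, det_updateCol_smul, e1, e2, mul_zero, add_zero]
  have htele : ∀ t, (F t).det = (F 0).det := by
    intro t
    induction t with
    | zero => rfl
    | succ t ih => rw [hstep t, ih]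
  -- Step E : F 0 is a column rotation of the Vandermonde matrix
  have hrot : A = (F 0).submatrix id (finRotate (n+1)) := by
    ext i j
    rw [Matrix.submatrix_apply, id_eq, finRotate_succ_apply]
    by_cases hj : j = Fin.last n
    · subst hj
      have : (Fin.last n) + 1 = 0 := by
        rw [Fin.last_add_one]
      rw [this]
      simp [hF_def, hA, vandermonde_apply]
    · have hlt : j < Fin.last n := lt_of_le_of_ne (Fin.le_last j) hj
      have hval : ((j + 1 : Fin (n+1)) : ℕ) = (j:ℕ) + 1 := Fin.val_add_one_of_lt hlt
      have h0 : ((j + 1 : Fin (n+1)) : ℕ) ≠ 0 := by rw [hval]; omega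
      have hle : ¬ (((j + 1 : Fin (n+1)) : ℕ) ≤ 0) := by rw [hval]; omega
      simp only [hF_def, Matrix.of_apply, if_neg h0, if_neg hle, hval, hA, vandermonde_apply]
      norm_num
  have hsign : (F 0).det = (-1 : ℝ)^n * A.det := by
    have h := det_permute' (finRotate (n+1)) (F 0)
    rw [← hrot, sign_finRotate] at h
    have hcast : ((((-1 : ℤˣ)^n : ℤˣ) : ℤ) : ℝ) = (-1:ℝ)^n := by
      push_cast
      norm_num
    rw [Nat.add_sub_cancel, hcast] at h
    rw [h, ← mul_assoc, ← mul_pow]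
    norm_num
  -- Assemble
  rw [hN, hu, det_updateCol_add]
  rw [det_updateCol_smul, hdet1, hdet2, hEF, htele n, hsign, hVdet]
  have hprod : (∏ i, ψ i / (1 + ψ i * s)) = (∏ i, ψ i) / ∏ i, (1 + ψ i * s) :=
    Finset.prod_div_distrib _ _
  have hPne : (∏ i, (1 + ψ i * s)) ≠ 0 := Finset.prod_ne_zero_iff.mpr fun i _ => h1' i
  have hodd : ((-1:ℝ))^(n+1) * (-1:ℝ)^n = -1 := by
    rw [← pow_add]
    exact Odd.neg_one_pow ⟨n, by ring⟩
  have hscal : (-s)^(n+1) * ((∏ i, ψ i / (1 + ψ i * s)) * ((-1:ℝ)^n * V))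
      = -(s^(n+1) * (((∏ i, ψ i) / ∏ i, (1 + ψ i * s))) * V) := by
    rw [hprod, neg_pow]
    rw [show ((-1:ℝ))^(n+1) * s^(n+1) * (((∏ i, ψ i) / ∏ i, (1 + ψ i * s)) * ((-1:ℝ)^n * V))
        = ((-1:ℝ)^(n+1) * (-1:ℝ)^n) * (s^(n+1) * (((∏ i, ψ i) / ∏ i, (1 + ψ i * s))) * V)
      from by ring, hodd]
    ring
  rw [hscal]
  field_simp
  have hQ : ∏ x, (1 + s * ψ x) = ∏ i, (1 + ψ i * s) := Finset.prod_congr rfl fun x _ => by ring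
  rw [hQ, mul_div_assoc, div_self hPne]
  ring
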